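/- Let n ≥ 1 be a natural number, let A be a finite set of size 3n and B ⊆ A a subset of size 2n. Let r ≥ 1 and ω be integers with 3r ≤ ω ≤ 3n. Then the number of ω-element subsets S of A with |S ∩ B| < r, divided by C(3n, ω), is strictly less than exp(−r/4). -/

import Mathlib

open Finset

section Aux
variable {V : Type*} [DecidableEq V]

noncomputable def pickSub (s : Finset V) (k : ℕ) : Finset V :=
  if h : k ≤ s.card then (Finset.exists_subset_card_eq h).choose else ∅

lemma pickSub_subset {s : Finset V} {k : ℕ} (h : k ≤ s.card) : pickSub s k ⊆ s := by
  rw [pickSub, dif_pos h]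
  exact (Finset.exists_subset_card_eq h).choose_spec.1

lemma pickSub_card {s : Finset V} {k : ℕ} (h : k ≤ s.card) : (pickSub s k).card = k := by
  rw [pickSub, dif_pos h]
  exact (Finset.exists_subset_card_eq h).choose_spec.2

end Aux

lemma descFactorial_three_mul (n : ℕ) :
    ∀ m, 3 ^ m * n.descFactorial m ≤ (3 * n).descFactorial m
  | 0 => by simp
  | (m+1) => by
    rw [Nat.descFactorial_succ, Nat.descFactorial_succ, pow_succ]
    calc 3 ^ m * 3 * ((n - m) * n.descFactorial m)
        = (3 * (n - m)) * (3 ^ m * n.descFactorial m) := by ring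
      _ ≤ (3 * n - m) * (3 * n).descFactorial m :=
          Nat.mul_le_mul (by omega) (descFactorial_three_mul n m)

lemma three_pow_choose_le (n m : ℕ) : 3 ^ m * n.choose m ≤ (3 * n).choose m := by
  have h := descFactorial_three_mul n m
  rw [Nat.descFactorial_eq_factorial_mul_choose, Nat.descFactorial_eq_factorial_mul_choose] at h
  have h2 : m.factorial * (3 ^ m * n.choose m) ≤ m.factorial * ((3*n).choose m) := by
    calc m.factorial * (3 ^ m * n.choose m) = 3 ^ m * (m.factorial * n.choose m) := by ring
      _ ≤ m.factorial * ((3*n).choose m) := h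
  exact Nat.le_of_mul_le_mul_left h2 (Nat.factorial_pos m)

lemma choose_succ_le_two_mul {ω k : ℕ} (h : 2 * k ≤ ω) : (ω+1).choose k ≤ 2 * ω.choose k := by
  cases k with
  | zero => simp
  | succ j =>
      rw [Nat.choose_succ_succ]
      simp only [Nat.succ_eq_add_one]
      have hj : ω.choose j ≤ ω.choose (j+1) :=
        Nat.choose_le_succ_of_lt_half_left (by omega)
      omega

lemma pow_mul_choose_decreasing (r : ℕ) :
    ∀ ω, 3 * r ≤ ω → 3 ^ (3*r) * ω.choose (r-1) ≤ 3 ^ ω * (3*r).choose (r-1) := by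
  refine Nat.le_induction le_rfl ?_
  intro ω hω IH
  calc 3 ^ (3*r) * (ω+1).choose (r-1)
      ≤ 3 ^ (3*r) * (2 * ω.choose (r-1)) :=
        Nat.mul_le_mul_left _ (choose_succ_le_two_mul (by omega))
    _ = 2 * (3 ^ (3*r) * ω.choose (r-1)) := by ring
    _ ≤ 2 * (3 ^ ω * (3*r).choose (r-1)) := Nat.mul_le_mul_left _ IH
    _ ≤ 3 ^ (ω+1) * (3*r).choose (r-1) := by
        rw [pow_succ]
        calc 2 * (3 ^ ω * (3*r).choose (r-1)) ≤ 3 * (3 ^ ω * (3*r).choose (r-1)) := by omega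
          _ = 3 ^ ω * 3 * (3*r).choose (r-1) := by ring

lemma choose_three_mul_bound : ∀ r, 1 ≤ r → (((3*r).choose (r-1) : ℝ)) * 4 ^ r ≤ 27 ^ r := by
  refine Nat.le_induction ?_ ?_
  · norm_num
  · intro r hr IH
    have h31 : 3 * (r + 1) = 3*r+3 := by ring
    have h11 : r + 1 - 1 = r := by omega
    rw [h31, h11]
    obtain ⟨s, rfl⟩ : ∃ s, r = s + 1 := ⟨r-1, by omega⟩
    set r := s + 1 with hrdef
    have hs : r - 1 = s := by omega
    rw [hs] at IH
    -- nat identities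
    have e1n := Nat.choose_mul_succ_eq (3*r) r
    have e2n := Nat.choose_mul_succ_eq (3*r+1) r
    have e3n := Nat.choose_mul_succ_eq (3*r+2) r
    have e4n := Nat.choose_succ_right_eq (3*r) s
    rw [show 3*r+1-r = 2*r+1 by omega] at e1n
    rw [show 3*r+1+1-r = 2*r+2 by omega] at e2n
    rw [show 3*r+2+1-r = 2*r+3 by omega] at e3n
    rw [show s+1 = r from rfl, show 3*r-s = 2*r+1 by omega] at e4n
    have e1 : ((3*r).choose r : ℝ) * (3*r+1) = ((3*r+1).choose r : ℝ) * (2*r+1) := by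
      exact_mod_cast congrArg (Nat.cast : ℕ → ℝ) e1n
    have e2 : ((3*r+1).choose r : ℝ) * (3*r+2) = ((3*r+2).choose r : ℝ) * (2*r+2) := by
      exact_mod_cast congrArg (Nat.cast : ℕ → ℝ) e2n
    have e3 : ((3*r+2).choose r : ℝ) * (3*r+3) = ((3*r+3).choose r : ℝ) * (2*r+3) := by
      exact_mod_cast congrArg (Nat.cast : ℕ → ℝ) e3n
    have e4 : ((3*r).choose r : ℝ) * r = ((3*r).choose s : ℝ) * (2*r+1) := by
      exact_mod_cast congrArg (Nat.cast : ℕ → ℝ) e4n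
    set c0 : ℝ := ((3*r).choose r : ℝ)
    set c1 : ℝ := ((3*r+1).choose r : ℝ)
    set c2 : ℝ := ((3*r+2).choose r : ℝ)
    set c3 : ℝ := ((3*r+3).choose r : ℝ)
    set b : ℝ := ((3*r).choose s : ℝ)
    have E : c3 * ((r:ℝ) * (2*r+1) * (2*r+2) * (2*r+3))
        = b * ((2*(r:ℝ)+1) * (3*r+1) * (3*r+2) * (3*r+3)) := by
      linear_combination (-(((r:ℝ))*(2*(r:ℝ)+1)*(2*(r:ℝ)+2)))*e3
        + (-(((r:ℝ))*(2*(r:ℝ)+1)*(3*(r:ℝ)+3)))*e2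
        + (-(((r:ℝ))*(3*(r:ℝ)+2)*(3*(r:ℝ)+3)))*e1
        + ((3*(r:ℝ)+1)*(3*(r:ℝ)+2)*(3*(r:ℝ)+3))*e4
    have hr1 : (1:ℝ) ≤ (r:ℝ) := by exact_mod_cast hr
    have hD : (0:ℝ) < (r:ℝ) * (2*r+1) * (2*r+2) * (2*r+3) := by positivity
    have hp27 : (0:ℝ) < (27:ℝ) ^ r := by positivity
    have key : c3 * 4 ^ (r+1) * ((r:ℝ) * (2*r+1) * (2*r+2) * (2*r+3))
        ≤ 27 ^ (r+1) * ((r:ℝ) * (2*r+1) * (2*r+2) * (2*r+3)) := by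
      calc c3 * 4 ^ (r+1) * ((r:ℝ) * (2*r+1) * (2*r+2) * (2*r+3))
          = (b * 4 ^ r) * ((2*(r:ℝ)+1) * (4 * ((3*r+1) * (3*r+2) * (3*r+3)))) := by
            rw [pow_succ]; linear_combination (4 * (4:ℝ)^r) * E
        _ ≤ (27 ^ r) * ((2*(r:ℝ)+1) * (4 * ((3*r+1) * (3*r+2) * (3*r+3)))) := by
            apply mul_le_mul_of_nonneg_right IH
            positivity
        _ ≤ 27 ^ (r+1) * ((r:ℝ) * (2*r+1) * (2*r+2) * (2*r+3)) := by
            have hcub : 4 * ((3*(r:ℝ)+1) * (3*r+2) * (3*r+3)) ≤ 27 * ((r:ℝ) * (2*r+2) * (2*r+3)) := by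
              nlinarith [sq_nonneg ((r:ℝ) - 1)]
            have h1 : (0:ℝ) ≤ (2*(r:ℝ)+1) * 27 ^ r := by positivity
            calc (27:ℝ) ^ r * ((2*(r:ℝ)+1) * (4 * ((3*(r:ℝ)+1) * (3*(r:ℝ)+2) * (3*(r:ℝ)+3))))
                = ((2*(r:ℝ)+1) * 27 ^ r) * (4 * ((3*(r:ℝ)+1) * (3*(r:ℝ)+2) * (3*(r:ℝ)+3))) := by ring
              _ ≤ ((2*(r:ℝ)+1) * 27 ^ r) * (27 * ((r:ℝ) * (2*(r:ℝ)+2) * (2*(r:ℝ)+3))) :=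
                  mul_le_mul_of_nonneg_left hcub h1
              _ = 27 ^ (r+1) * ((r:ℝ) * (2*(r:ℝ)+1) * (2*(r:ℝ)+2) * (2*(r:ℝ)+3)) := by
                  rw [pow_succ]; ring
    have hb : c3 * 4 ^ (r+1) ≤ 27 ^ (r+1) := le_of_mul_le_mul_right key hD
    exact hb

lemma exp_quarter_bound : (3/4 : ℝ) ≤ Real.exp (-(1/4)) := by
  have h4 : Real.exp (1/4) ^ (4:ℕ) = Real.exp 1 := by
    rw [← Real.exp_nat_mul]; norm_num
  have he : Real.exp 1 < 2.7182818286 := Real.exp_one_lt_d9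
  have hx : Real.exp (1/4) < 4/3 := by
    by_contra hcon
    push_neg at hcon
    have := pow_le_pow_left₀ (by norm_num : (0:ℝ) ≤ 4/3) hcon 4
    rw [h4] at this
    norm_num at this
    linarith
  have hprod : Real.exp (-(1/4)) * Real.exp (1/4) = 1 := by
    rw [← Real.exp_add]; norm_num
  nlinarith [Real.exp_pos (-(1/4):ℝ), Real.exp_pos (1/4:ℝ)]

theorem threshold_trap_detection_uniform {V : Type*} [DecidableEq V] (n : ℕ)
    (hn : 1 ≤ n) (A B : Finset V) (hA : A.card = 3 * n) (hBA : B ⊆ A)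
    (hB : B.card = 2 * n) (r ω : ℕ) (hr : 1 ≤ r) (hω1 : 3 * r ≤ ω)
    (hω2 : ω ≤ 3 * n) :
    (((A.powersetCard ω).filter (fun S => (S ∩ B).card < r)).card : ℝ)
        / ((3 * n).choose ω : ℝ)
      < Real.exp (-(r : ℝ) / 4) := by
  classical
  set m := ω - r + 1 with hmdef
  have hmω : m ≤ ω := by omega
  have hABc : (A \ B).card = n := by rw [Finset.card_sdiff_of_subset hBA]; omega
  set bad := (A.powersetCard ω).filter (fun S => (S ∩ B).card < r) with hbad
  -- facts about bad sets
  have hSfacts : ∀ S ∈ bad, S ⊆ A ∧ S.card = ω ∧ m ≤ (S \ B).card := by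
    intro S hS
    rw [hbad, Finset.mem_filter, Finset.mem_powersetCard] at hS
    have h2 := Finset.card_inter_add_card_sdiff S B
    exact ⟨hS.1.1, hS.1.2, by omega⟩
  -- counting via injection into a sigma set
  have hcount : bad.card ≤ n.choose m * (3*n - m).choose (ω - m) := by
    have hle : bad.card ≤
        (((A \ B).powersetCard m).sigma fun T => (A \ T).powersetCard (ω - m)).card := by
      apply Finset.card_le_card_of_injOn
        (fun S => (⟨pickSub (S \ B) m, S \ pickSub (S \ B) m⟩ : Σ _ : Finset V, Finset V))
      · intro S hS
        obtain ⟨hSA, hSc, hm'⟩ := hSfacts S hS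
        have hp1 := pickSub_subset hm'
        have hp2 := pickSub_card hm'
        have hpS : pickSub (S \ B) m ⊆ S := hp1.trans Finset.sdiff_subset
        rw [Finset.mem_coe, Finset.mem_sigma]
        constructor
        · rw [Finset.mem_powersetCard]
          exact ⟨hp1.trans (Finset.sdiff_subset_sdiff hSA (Finset.Subset.refl B)), hp2⟩
        · rw [Finset.mem_powersetCard]
          refine ⟨Finset.sdiff_subset_sdiff hSA (Finset.Subset.refl _), ?_⟩
          rw [Finset.card_sdiff_of_subset hpS, hSc, hp2]
      · intro S1 h1 S2 h2 heq
        obtain ⟨hSA1, hSc1, hm1⟩ := hSfacts S1 h1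
        obtain ⟨hSA2, hSc2, hm2⟩ := hSfacts S2 h2
        simp only [Sigma.mk.inj_iff] at heq
        obtain ⟨hT, hRest⟩ := heq
        have hRest' := eq_of_heq hRest
        have hpS1 : pickSub (S1 \ B) m ⊆ S1 := (pickSub_subset hm1).trans Finset.sdiff_subset
        have hpS2 : pickSub (S2 \ B) m ⊆ S2 := (pickSub_subset hm2).trans Finset.sdiff_subset
        calc S1 = pickSub (S1 \ B) m ∪ (S1 \ pickSub (S1 \ B) m) :=
              (Finset.union_sdiff_of_subset hpS1).symm
          _ = pickSub (S2 \ B) m ∪ (S2 \ pickSub (S2 \ B) m) := by rw [hRest', hT]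
          _ = S2 := Finset.union_sdiff_of_subset hpS2
    have hsig : (((A \ B).powersetCard m).sigma fun T => (A \ T).powersetCard (ω - m)).card
        = n.choose m * (3*n - m).choose (ω - m) := by
      rw [Finset.card_sigma]
      have hterm : ∀ T ∈ (A \ B).powersetCard m,
          ((A \ T).powersetCard (ω - m)).card = (3*n - m).choose (ω - m) := by
        intro T hT
        rw [Finset.mem_powersetCard] at hT
        rw [Finset.card_powersetCard, Finset.card_sdiff_of_subset (hT.1.trans Finset.sdiff_subset), hA, hT.2]
      rw [Finset.sum_congr rfl hterm, Finset.sum_const, Finset.card_powersetCard, hABc,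
        smul_eq_mul]
    omega
  -- binomial identities and estimates in ℕ
  have hid : (3*n).choose ω * ω.choose m = (3*n).choose m * (3*n - m).choose (ω - m) :=
    Nat.choose_mul hmω
  have hsymm : ω.choose m = ω.choose (r-1) := by
    have h1 : ω - m = r - 1 := by omega
    rw [← Nat.choose_symm hmω, h1]
  have K : 3 ^ ω * (3 ^ (2*r+1) * bad.card)
      ≤ 3 ^ ω * ((3*n).choose ω * (3*r).choose (r-1)) := by
    have hexp : 3 ^ (3*r) * 3 ^ m = 3 ^ ω * 3 ^ (2*r+1) := by
      rw [← pow_add, ← pow_add]; congr 1; omega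
    calc 3 ^ ω * (3 ^ (2*r+1) * bad.card) = 3 ^ (3*r) * (3 ^ m * bad.card) := by
          rw [← Nat.mul_assoc, ← hexp]; ring
      _ ≤ 3 ^ (3*r) * (3 ^ m * (n.choose m * (3*n - m).choose (ω - m))) :=
          Nat.mul_le_mul_left _ (Nat.mul_le_mul_left _ hcount)
      _ = 3 ^ (3*r) * ((3 ^ m * n.choose m) * (3*n - m).choose (ω - m)) := by ring
      _ ≤ 3 ^ (3*r) * ((3*n).choose m * (3*n - m).choose (ω - m)) :=
          Nat.mul_le_mul_left _ (Nat.mul_le_mul_right _ (three_pow_choose_le n m))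
      _ = 3 ^ (3*r) * ((3*n).choose ω * ω.choose m) := by rw [← hid]
      _ = (3*n).choose ω * (3 ^ (3*r) * ω.choose (r-1)) := by rw [hsymm]; ring
      _ ≤ (3*n).choose ω * (3 ^ ω * (3*r).choose (r-1)) :=
          Nat.mul_le_mul_left _ (pow_mul_choose_decreasing r ω hω1)
      _ = 3 ^ ω * ((3*n).choose ω * (3*r).choose (r-1)) := by ring
  have K2 : 3 ^ (2*r+1) * bad.card ≤ (3*n).choose ω * (3*r).choose (r-1) :=
    Nat.le_of_mul_le_mul_left K (pow_pos (by norm_num) ω)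
  -- move to ℝ
  have hC : (0:ℝ) < ((3*n).choose ω : ℝ) := by
    exact_mod_cast Nat.choose_pos hω2
  have K2R : (3:ℝ) ^ (2*r+1) * (bad.card : ℝ)
      ≤ ((3*n).choose ω : ℝ) * (((3*r).choose (r-1) : ℕ) : ℝ) := by
    exact_mod_cast K2
  have hv : (((3*r).choose (r-1) : ℕ) : ℝ) * 4 ^ r ≤ 27 ^ r := choose_three_mul_bound r hr
  have h36 : (3:ℝ) ^ (2*r+1) * 4 ^ r = 3 * 36 ^ r := by
    rw [pow_succ, pow_mul, show (36:ℝ) = 9 * 4 by norm_num, mul_pow]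
    norm_num
    ring
  have H1 : (bad.card : ℝ) * (3 * 36 ^ r) ≤ ((3*n).choose ω : ℝ) * 27 ^ r := by
    calc (bad.card : ℝ) * (3 * 36 ^ r) = ((3:ℝ) ^ (2*r+1) * (bad.card : ℝ)) * 4 ^ r := by
          rw [← h36]; ring
      _ ≤ (((3*n).choose ω : ℝ) * (((3*r).choose (r-1) : ℕ) : ℝ)) * 4 ^ r :=
          mul_le_mul_of_nonneg_right K2R (by positivity)
      _ = ((3*n).choose ω : ℝ) * ((((3*r).choose (r-1) : ℕ) : ℝ) * 4 ^ r) := by ring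
      _ ≤ ((3*n).choose ω : ℝ) * 27 ^ r := mul_le_mul_of_nonneg_left hv hC.le
  have hpow : ((3:ℝ)/4) ^ r ≤ Real.exp (-(r:ℝ)/4) := by
    calc ((3:ℝ)/4) ^ r ≤ (Real.exp (-(1/4))) ^ r :=
          pow_le_pow_left₀ (by norm_num) exp_quarter_bound r
      _ = Real.exp (-(r:ℝ)/4) := by
          rw [← Real.exp_nat_mul]; congr 1; ring
  have H2 : ((3*n).choose ω : ℝ) * 27 ^ r
      < (Real.exp (-(r:ℝ)/4) * ((3*n).choose ω : ℝ)) * (3 * 36 ^ r) := by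
    have h27 : (27:ℝ) ^ r = ((3:ℝ)/4) ^ r * 36 ^ r := by
      rw [← mul_pow]; norm_num
    have hE : (0:ℝ) < Real.exp (-(r:ℝ)/4) := Real.exp_pos _
    have h36p : (0:ℝ) < (36:ℝ) ^ r := by positivity
    calc ((3*n).choose ω : ℝ) * 27 ^ r
        = ((3*n).choose ω : ℝ) * (((3:ℝ)/4) ^ r * 36 ^ r) := by rw [h27]
      _ ≤ ((3*n).choose ω : ℝ) * (Real.exp (-(r:ℝ)/4) * 36 ^ r) := by
          apply mul_le_mul_of_nonneg_left _ hC.le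
          exact mul_le_mul_of_nonneg_right hpow h36p.le
      _ < (Real.exp (-(r:ℝ)/4) * ((3*n).choose ω : ℝ)) * (3 * 36 ^ r) := by
          have : (0:ℝ) < ((3*n).choose ω : ℝ) * (Real.exp (-(r:ℝ)/4) * 36 ^ r) := by positivity
          nlinarith
  rw [div_lt_iff₀ hC]
  have := H1.trans_lt H2
  have h336 : (0:ℝ) ≤ 3 * 36 ^ r := by positivity
  exact lt_of_mul_lt_mul_right this h336
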